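/- The part of K₊ lying in the interval [−10, 1] is exactly C: K₊ ∩ [−10, 1] = C. -/

import Mathlib

noncomputable section

/-- The affine contraction of ratio 1/100 fixing 0. -/
def T0 (x : ℝ) : ℝ := x / 100

/-- The affine contraction of ratio 1/100 fixing 1. -/
def T1 (x : ℝ) : ℝ := 1 + (x - 1) / 100

/-- The affine contraction of ratio 1/100 fixing -1. -/
def Tm1 (x : ℝ) : ℝ := -1 + (x + 1) / 100

/-- The inverse of `T0`. -/
def T0inv (x : ℝ) : ℝ := 100 * x

/-- The `i`-th iterate of `T0` for `i ≥ 0`, and the `|i|`-th iterate of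
`T0⁻¹ : x ↦ 100 x` for `i < 0`. -/
def T0z : ℤ → ℝ → ℝ
  | Int.ofNat n => T0^[n]
  | Int.negSucc n => T0inv^[n + 1]

/-- The set `K₊ = {0} ∪ ⋃ i ∈ ℤ, T₀^[i] '' (C₁ ∪ C₋₁)` where `C₁ = T₁ '' C`,
`C₋₁ = T₋₁ '' C`. -/
def Kplus (C : Set ℝ) : Set ℝ := {0} ∪ ⋃ i : ℤ, T0z i '' (T1 '' C ∪ Tm1 '' C)

lemma T0_iter (n : ℕ) (x : ℝ) : T0^[n] x = x / 100 ^ n := by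
  induction n with
  | zero => simp
  | succ n ih => rw [Function.iterate_succ_apply', ih, T0]; ring

lemma T0inv_iter (n : ℕ) (x : ℝ) : T0inv^[n] x = 100 ^ n * x := by
  induction n with
  | zero => simp
  | succ n ih => rw [Function.iterate_succ_apply', ih, T0inv]; ring

lemma T0z_ofNat (n : ℕ) : T0z (n : ℤ) = T0^[n] := rfl

lemma T0z_negSucc (n : ℕ) : T0z (Int.negSucc n) = T0inv^[n + 1] := rfl

theorem stmt_10 (C : Set ℝ) (hne : C.Nonempty) (hcomp : IsCompact C)
    (hself : C = Tm1 '' C ∪ T0 '' C ∪ T1 '' C) :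
    Kplus C ∩ Set.Icc (-10 : ℝ) 1 = C := by
  -- every element of C has absolute value at most 1
  have habs : ∀ x ∈ C, |x| ≤ 1 := by
    obtain ⟨x₀, hx₀C, hmax⟩ := hcomp.exists_isMaxOn hne (continuous_abs.continuousOn)
    have key : |x₀| ≤ 1 := by
      have hmem := hx₀C
      rw [hself] at hmem
      rcases hmem with (⟨y, hy, hyx⟩ | ⟨y, hy, hyx⟩) | ⟨y, hy, hyx⟩ <;>
      · have hym : |y| ≤ |x₀| := hmax hy
        obtain ⟨h1, h2⟩ := abs_le.mp hym
        rcases abs_cases x₀ with ⟨h3, _⟩ | ⟨h3, _⟩ <;>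
          simp only [Tm1, T0, T1] at hyx <;> linarith
    intro x hx
    have hxm : |x| ≤ |x₀| := hmax hx
    exact hxm.trans key
  -- closure under the three maps
  have hT0C : ∀ x ∈ C, T0 x ∈ C := by
    intro x hx; rw [hself]; exact Or.inl (Or.inr ⟨x, hx, rfl⟩)
  have hiter : ∀ n, ∀ x ∈ C, T0^[n] x ∈ C := by
    intro n
    induction n with
    | zero => intro x hx; simpa using hx
    | succ n ih =>
      intro x hx
      rw [Function.iterate_succ_apply]
      exact ih _ (hT0C x hx)
  have hsubC : T1 '' C ∪ Tm1 '' C ⊆ C := by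
    rintro x (⟨y, hy, rfl⟩ | ⟨y, hy, rfl⟩)
    · rw [hself]; exact Or.inr ⟨y, hy, rfl⟩
    · rw [hself]; exact Or.inl (Or.inl ⟨y, hy, rfl⟩)
  -- 0 ∈ C
  have h0C : (0 : ℝ) ∈ C := by
    obtain ⟨x, hx⟩ := hne
    have htend : Filter.Tendsto (fun n => T0^[n] x) Filter.atTop (nhds 0) := by
      have h1 : Filter.Tendsto (fun n : ℕ => ((1 : ℝ)/100) ^ n) Filter.atTop (nhds 0) :=
        tendsto_pow_atTop_nhds_zero_of_lt_one (by norm_num) (by norm_num)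
      have h2 := h1.const_mul x
      rw [mul_zero] at h2
      convert h2 using 2 with n
      rw [T0_iter]
      field_simp
      rw [mul_assoc, ← mul_pow]; norm_num
    exact hcomp.isClosed.mem_of_tendsto htend
      (Filter.Eventually.of_forall fun n => hiter n x hx)
  -- the key dichotomy
  have claim : ∀ n, ∀ x ∈ C, x ∈ Kplus C ∨ ∃ y ∈ C, x = T0^[n] y := by
    intro n
    induction n with
    | zero => intro x hx; exact Or.inr ⟨x, hx, by simp⟩
    | succ n ih =>
      intro x hx
      rcases ih x hx with h | ⟨y, hy, rfl⟩
      · exact Or.inl h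
      · have hy' := hy
        rw [hself] at hy'
        rcases hy' with (⟨z, hz, rfl⟩ | ⟨z, hz, rfl⟩) | ⟨z, hz, rfl⟩
        · exact Or.inl (Or.inr (Set.mem_iUnion.2
            ⟨(n : ℤ), ⟨Tm1 z, Or.inr ⟨z, hz, rfl⟩, by rw [T0z_ofNat]⟩⟩))
        · exact Or.inr ⟨z, hz, (Function.iterate_succ_apply T0 n z).symm⟩
        · exact Or.inl (Or.inr (Set.mem_iUnion.2
            ⟨(n : ℤ), ⟨T1 z, Or.inl ⟨z, hz, rfl⟩, by rw [T0z_ofNat]⟩⟩))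
  apply Set.eq_of_subset_of_subset
  · -- Kplus ∩ Icc ⊆ C
    rintro x ⟨hK, hx1, hx2⟩
    rcases hK with h0 | hU
    · simp only [Set.mem_singleton_iff] at h0
      subst h0; exact h0C
    · obtain ⟨i, y, hyD, rfl⟩ := Set.mem_iUnion.1 hU
      cases i with
      | ofNat n =>
        have : T0z (Int.ofNat n) y = T0^[n] y := rfl
        rw [this] at hx1 hx2 ⊢
        exact hiter n y (hsubC hyD)
      | negSucc n =>
        exfalso
        rw [T0z_negSucc, T0inv_iter] at hx1 hx2
        have hp : (100 : ℝ) ≤ 100 ^ (n + 1) := by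
          calc (100 : ℝ) = 100 ^ 1 := by norm_num
          _ ≤ 100 ^ (n + 1) := by
            apply pow_le_pow_right₀ (by norm_num) (by omega)
        rcases hyD with ⟨z, hz, rfl⟩ | ⟨z, hz, rfl⟩
        · obtain ⟨h1, h2⟩ := abs_le.mp (habs z hz)
          simp only [T1] at hx1 hx2
          nlinarith
        · obtain ⟨h1, h2⟩ := abs_le.mp (habs z hz)
          simp only [Tm1] at hx1 hx2
          nlinarith
  · -- C ⊆ Kplus ∩ Icc
    intro x hx
    refine ⟨?_, ?_, ?_⟩
    · by_cases h0x : x = 0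
      · exact Or.inl (by simp [h0x])
      · obtain ⟨n, hn⟩ := exists_pow_lt_of_lt_one (abs_pos.2 h0x) (by norm_num : (1:ℝ)/100 < 1)
        rcases claim n x hx with h | ⟨y, hy, rfl⟩
        · exact h
        · exfalso
          have h1 : |T0^[n] y| ≤ ((1:ℝ)/100) ^ n := by
            rw [T0_iter, abs_div, abs_pow, abs_of_nonneg (by norm_num : (0:ℝ) ≤ 100),
              div_pow, one_pow]
            gcongr
            exact habs y hy
          linarith
    · have := abs_le.mp (habs x hx); linarith [this.1]
    · exact (abs_le.mp (habs x hx)).2
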